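/- Let q : ℝ^{2d} → ℂ be a quadratic form with Hamilton map F such that Re q(X) ≥ 0 for all X ∈ ℝ^{2d}. Then the following are equivalent: (i) for every T > 0 the quadratic form X ↦ (1/T)∫₀^T Re q(exp(2t·Im F)X) dt is positive definite on ℝ^{2d}; (ii) the singular space of q is trivial, S = {0}. -/

import Mathlib

open Matrix

noncomputable section

/-- The standard symplectic matrix `J = [[0, -I], [I, 0]]` on `R^d ⊕ R^d`. -/
def Jmat (d : ℕ) (R : Type*) [Ring R] :
    Matrix (Fin d ⊕ Fin d) (Fin d ⊕ Fin d) R :=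
  Matrix.fromBlocks 0 (-1) 1 0

/-- The complex quadratic form `X ↦ ⟨X, A X⟩` evaluated on a real vector `X ∈ ℝ^{2d}`. -/
def Qc {d : ℕ} (A : Matrix (Fin d ⊕ Fin d) (Fin d ⊕ Fin d) ℂ)
    (X : Fin d ⊕ Fin d → ℝ) : ℂ :=
  (fun i => (X i : ℂ)) ⬝ᵥ A *ᵥ (fun i => (X i : ℂ))

open NormedSpace Polynomial

section Aux

variable {n : Type*} [Fintype n] [DecidableEq n]

/-- Real part of a complex quadratic form evaluated on a real vector. -/
theorem aux_re_quad (A : Matrix n n ℂ) (X : n → ℝ) :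
    ((fun i => (X i : ℂ)) ⬝ᵥ A *ᵥ (fun i => (X i : ℂ))).re
      = X ⬝ᵥ (A.map Complex.re) *ᵥ X := by
  simp [dotProduct, mulVec, Complex.re_sum, Complex.re_ofReal_mul, Finset.mul_sum,
    Matrix.map_apply, mul_comm, mul_left_comm]

theorem aux_psd (M : Matrix n n ℝ) (hs : M.IsSymm) (h : ∀ x : n → ℝ, 0 ≤ x ⬝ᵥ M *ᵥ x) :
    M.PosSemidef :=
  Matrix.PosSemidef.of_dotProduct_mulVec_nonneg (by rwa [Matrix.IsHermitian, conjTranspose_eq_transpose_of_trivial]) fun x => by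
    simpa using h x

/-- If `B * N^k * X = 0` for all `k`, then `B * exp(t N) * X = 0`. -/
theorem aux_exp_vanish (B N : Matrix n n ℝ) (X : n → ℝ)
    (h : ∀ k : ℕ, (B * N ^ k) *ᵥ X = 0) (t : ℝ) :
    (B * exp (t • N)) *ᵥ X = 0 := by
  letI : SeminormedRing (Matrix n n ℝ) := Matrix.linftyOpSemiNormedRing
  letI : NormedRing (Matrix n n ℝ) := Matrix.linftyOpNormedRing
  letI : NormedAlgebra ℝ (Matrix n n ℝ) := Matrix.linftyOpNormedAlgebra
  let L0 : Matrix n n ℝ →ₗ[ℝ] (n → ℝ) :=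
    { toFun := fun M => (B * M) *ᵥ X
      map_add' := by intro M₁ M₂; simp [Matrix.mul_add, Matrix.add_mulVec]
      map_smul' := by intro c M; simp [Matrix.mul_smul, Matrix.smul_mulVec] }
  let L : Matrix n n ℝ →L[ℝ] (n → ℝ) := LinearMap.toContinuousLinearMap L0
  have hsum : HasSum (fun k : ℕ => ((k.factorial : ℝ)⁻¹) • (t • N) ^ k) (exp (t • N)) := by
    rw [exp_eq_tsum ℝ]
    exact (expSeries_summable' (𝕂 := ℝ) (t • N)).hasSum
  have h2 : HasSum (fun k : ℕ => L (((k.factorial : ℝ)⁻¹) • (t • N) ^ k)) (L (exp (t • N))) :=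
    L.hasSum hsum
  have h3 : ∀ k : ℕ, L (((k.factorial : ℝ)⁻¹) • (t • N) ^ k) = 0 := by
    intro k
    have hp : (t • N) ^ k = (t ^ k) • N ^ k := by rw [_root_.smul_pow]
    rw [hp, smul_smul, L.map_smul]
    have hLk : L (N ^ k) = 0 := h k
    rw [hLk, smul_zero]
  rw [funext h3] at h2
  exact h2.unique hasSum_zero

/-- Cayley–Hamilton extension: vanishing for `k < card n` implies vanishing for all `k`. -/
theorem aux_CH (B N : Matrix n n ℝ) (X : n → ℝ)
    (h : ∀ k < Fintype.card n, (B * N ^ k) *ᵥ X = 0) (k : ℕ) : (B * N ^ k) *ᵥ X = 0 := by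
  set c := Fintype.card n with hc
  induction k using Nat.strong_induction_on with
  | _ k ih =>
    rcases lt_or_ge k c with hk | hk
    · exact h k hk
    · have hch : aeval N N.charpoly = 0 := N.aeval_self_charpoly
      have hdeg : N.charpoly.natDegree = c := N.charpoly_natDegree_eq_dim
      have hsum : (0 : Matrix n n ℝ) = ∑ i ∈ Finset.range (c + 1), N.charpoly.coeff i • N ^ i := by
        rw [← hch, aeval_eq_sum_range' (by omega : N.charpoly.natDegree < c + 1)]
      have hlead : N.charpoly.coeff c = 1 := by
        rw [← hdeg]; exact N.charpoly_monic.coeff_natDegree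
      have hNc : N ^ c = -∑ i ∈ Finset.range c, N.charpoly.coeff i • N ^ i := by
        rw [Finset.sum_range_succ, hlead, one_smul, eq_comm] at hsum
        exact eq_neg_of_add_eq_zero_right hsum
      have key : B * N ^ k = -∑ i ∈ Finset.range c, N.charpoly.coeff i • (B * N ^ (k - c + i)) := by
        calc B * N ^ k = (B * N ^ (k - c)) * N ^ c := by
              rw [Matrix.mul_assoc, ← pow_add]
              congr 2
              omega
        _ = -∑ i ∈ Finset.range c, N.charpoly.coeff i • ((B * N ^ (k - c)) * N ^ i) := by
              rw [hNc, Matrix.mul_neg, Finset.mul_sum]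
              congr 1
              exact Finset.sum_congr rfl fun i _ => Matrix.mul_smul _ _ _
        _ = -∑ i ∈ Finset.range c, N.charpoly.coeff i • (B * N ^ (k - c + i)) := by
              congr 1
              refine Finset.sum_congr rfl fun i _ => ?_
              rw [Matrix.mul_assoc, ← pow_add]
      have hms : (∑ i ∈ Finset.range c, N.charpoly.coeff i • (B * N ^ (k - c + i))) *ᵥ X
          = ∑ i ∈ Finset.range c, (N.charpoly.coeff i • (B * N ^ (k - c + i))) *ᵥ X :=
        map_sum (mulVec.addMonoidHomLeft X) _ (Finset.range c)
      rw [key, Matrix.neg_mulVec, hms]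
      have hz : ∀ i ∈ Finset.range c, (N.charpoly.coeff i • (B * N ^ (k - c + i))) *ᵥ X = 0 := by
        intro i hi
        have hsm : (N.charpoly.coeff i • (B * N ^ (k - c + i))) *ᵥ X
            = N.charpoly.coeff i • ((B * N ^ (k - c + i)) *ᵥ X) := smul_mulVec _ _ _
        rw [hsm, ih (k - c + i) (by simp only [Finset.mem_range] at hi; omega), smul_zero]
      rw [Finset.sum_congr rfl hz, Finset.sum_const_zero, neg_zero]

theorem aux_derivMul (B C N : Matrix n n ℝ) (X : n → ℝ) (t : ℝ) :
    HasDerivAt (fun u : ℝ => (B * exp (u • N) * C) *ᵥ X)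
      ((B * (exp (t • N) * N) * C) *ᵥ X) t := by
  letI : SeminormedRing (Matrix n n ℝ) := Matrix.linftyOpSemiNormedRing
  letI : NormedRing (Matrix n n ℝ) := Matrix.linftyOpNormedRing
  letI : NormedAlgebra ℝ (Matrix n n ℝ) := Matrix.linftyOpNormedAlgebra
  have hd := hasDerivAt_exp_smul_const N t
  let L0 : Matrix n n ℝ →ₗ[ℝ] (n → ℝ) :=
    { toFun := fun M => (B * M * C) *ᵥ X
      map_add' := by intro M₁ M₂; simp [Matrix.mul_add, Matrix.add_mul, Matrix.add_mulVec]
      map_smul' := by intro c M; simp [Matrix.mul_smul, Matrix.smul_mul, Matrix.smul_mulVec] }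
  let L : Matrix n n ℝ →L[ℝ] (n → ℝ) := LinearMap.toContinuousLinearMap L0
  exact (L.hasFDerivAt (x := exp (t • N))).comp_hasDerivAt t hd

/-- If `B * exp(t N) * X = 0` on an interval `(0, T)`, then `B * N^k * X = 0` for all `k`. -/
theorem aux_vanishIoo (B N : Matrix n n ℝ) (X : n → ℝ) {T : ℝ} (hT : 0 < T)
    (h : ∀ t ∈ Set.Ioo (0:ℝ) T, (B * exp (t • N)) *ᵥ X = 0) (k : ℕ) :
    (B * N ^ k) *ᵥ X = 0 := by
  have hasD : ∀ (k : ℕ) (t : ℝ),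
      HasDerivAt (fun u : ℝ => (B * exp (u • N) * N ^ k) *ᵥ X)
        ((B * exp (t • N) * N ^ (k + 1)) *ᵥ X) t := by
    intro k t
    have hD := aux_derivMul B (N ^ k) N X t
    have he : B * (exp (t • N) * N) * N ^ k = B * exp (t • N) * N ^ (k + 1) := by
      rw [Matrix.mul_assoc B, Matrix.mul_assoc B, Matrix.mul_assoc, ← pow_succ']
    rwa [he] at hD
  have hEq : ∀ (k : ℕ), ∀ t ∈ Set.Ioo (0:ℝ) T, (B * exp (t • N) * N ^ k) *ᵥ X = 0 := by
    intro k
    induction k with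
    | zero => intro t ht; rw [pow_zero, Matrix.mul_one]; exact h t ht
    | succ k ih =>
      intro t ht
      have ev : (fun u : ℝ => (B * exp (u • N) * N ^ k) *ᵥ X) =ᶠ[nhds t] fun _ => (0 : n → ℝ) :=
        Filter.eventuallyEq_of_mem (Ioo_mem_nhds ht.1 ht.2) ih
      have h1 : HasDerivAt (fun u : ℝ => (B * exp (u • N) * N ^ k) *ᵥ X) 0 t :=
        (hasDerivAt_const t (0 : n → ℝ)).congr_of_eventuallyEq ev
      exact (hasD k t).unique h1
  have hcont : ∀ (k : ℕ), Continuous (fun u : ℝ => (B * exp (u • N) * N ^ k) *ᵥ X) :=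
    fun k => continuous_iff_continuousAt.2 fun t => (hasD k t).continuousAt
  have hcl : Set.EqOn (fun u : ℝ => (B * exp (u • N) * N ^ k) *ᵥ X) (fun _ => (0 : n → ℝ))
      (closure (Set.Ioo (0:ℝ) T)) :=
    Set.EqOn.closure (hEq k) (hcont k) continuous_const
  have h0 : (B * exp ((0:ℝ) • N) * N ^ k) *ᵥ X = 0 := by
    have hmem : (0:ℝ) ∈ closure (Set.Ioo (0:ℝ) T) := by
      rw [closure_Ioo hT.ne]; exact ⟨le_refl _, hT.le⟩
    exact hcl hmem
  rwa [zero_smul, exp_zero, Matrix.mul_one] at h0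

end Aux

section JmatAux

variable {d : ℕ}

theorem aux_Jmat_map : (Jmat d ℝ).map (fun r : ℝ => (r : ℂ)) = Jmat d ℂ := by
  ext i j
  rcases i with i | i <;> rcases j with j | j <;>
    simp [Jmat, Matrix.fromBlocks, Matrix.map_apply, Matrix.one_apply] <;>
    split <;> simp

theorem aux_Jmat_sq : Jmat d ℝ * Jmat d ℝ = -1 := by
  simp [Jmat, Matrix.fromBlocks_multiply, ← Matrix.fromBlocks_one, Matrix.fromBlocks_neg]

theorem aux_map_re_mul (M : Matrix (Fin d ⊕ Fin d) (Fin d ⊕ Fin d) ℝ)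
    (N : Matrix (Fin d ⊕ Fin d) (Fin d ⊕ Fin d) ℂ) :
    ((M.map (fun r : ℝ => (r : ℂ))) * N).map Complex.re = M * (N.map Complex.re) := by
  ext i j
  simp [Matrix.mul_apply, Matrix.map_apply, Complex.re_sum, Complex.re_ofReal_mul]

end JmatAux

/-- For a quadratic form `q(X) = ⟨X, A X⟩` on `ℝ^{2d}` with Hamilton map
`F = -J A` and `Re q ≥ 0`, the time averages `⟨Re q⟩_{Im q, T}` are positive definite for
every `T > 0` if and only if the singular space
`S = (⋂_{k=0}^{2d-1} ker (Re F ∘ (Im F)^k)) ∩ ℝ^{2d}` is trivial. -/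
theorem statement0 (d : ℕ) (hd : 0 < d)
    (A F : Matrix (Fin d ⊕ Fin d) (Fin d ⊕ Fin d) ℂ)
    (hA : A.IsSymm)
    (hF : F = -(Jmat d ℂ) * A)
    (hpos : ∀ X : Fin d ⊕ Fin d → ℝ, 0 ≤ (Qc A X).re) :
    ((∀ T : ℝ, 0 < T → ∀ X : Fin d ⊕ Fin d → ℝ, X ≠ 0 →
        0 < (1 / T) * ∫ t in (0:ℝ)..T,
          (Qc A (NormedSpace.exp ((2 * t) • F.map Complex.im) *ᵥ X)).re)
      ↔ (∀ X : Fin d ⊕ Fin d → ℝ,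
          (∀ k : ℕ, k ≤ 2 * d - 1 →
            (F.map Complex.re * (F.map Complex.im) ^ k) *ᵥ X = 0) → X = 0)) := by
  set ReA := A.map Complex.re with hReA
  set ReF := F.map Complex.re with hReF
  set ImF := F.map Complex.im with hImF
  set Jr := Jmat d ℝ with hJr
  set N := (2:ℝ) • ImF with hN
  -- basic facts
  have hcard : Fintype.card (Fin d ⊕ Fin d) = 2 * d := by
    simp [Fintype.card_sum, two_mul]
  have hReF_eq : ReF = -Jr * ReA := by
    rw [hReF, hF, ← aux_Jmat_map]
    have : -((Jmat d ℝ).map (fun r : ℝ => (r : ℂ))) = ((-Jmat d ℝ).map (fun r : ℝ => (r : ℂ))) := by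
      ext i j; simp [Matrix.map_apply]
    rw [this, aux_map_re_mul]
  have hReA_eq : ReA = Jr * ReF := by
    rw [hReF_eq, Matrix.neg_mul, Matrix.mul_neg, ← Matrix.mul_assoc, aux_Jmat_sq]
    simp
  have hReAsymm : ReA.IsSymm := by
    rw [Matrix.IsSymm, hReA, ← Matrix.transpose_map, hA]
  have hreQ : ∀ Y : Fin d ⊕ Fin d → ℝ, (Qc A Y).re = Y ⬝ᵥ ReA *ᵥ Y := fun Y => aux_re_quad A Y
  have hpsd : ReA.PosSemidef := aux_psd ReA hReAsymm (fun x => by rw [← hreQ x]; exact hpos x)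
  have hsm : ∀ t : ℝ, (2 * t) • ImF = t • N := by
    intro t; rw [hN, smul_smul, mul_comm]
  -- scaling between powers of N and powers of ImF
  have hscale : ∀ (B : Matrix (Fin d ⊕ Fin d) (Fin d ⊕ Fin d) ℝ) (X : Fin d ⊕ Fin d → ℝ) (k : ℕ),
      (B * N ^ k) *ᵥ X = ((2:ℝ) ^ k) • ((B * ImF ^ k) *ᵥ X) := by
    intro B X k
    rw [hN, _root_.smul_pow, Matrix.mul_smul, smul_mulVec]
  constructor
  · -- (i) → (ii)
    intro hint X hX
    by_contra hX0
    have hk0 : ∀ k < Fintype.card (Fin d ⊕ Fin d), (ReF * ImF ^ k) *ᵥ X = 0 := by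
      intro k hklt
      exact hX k (by omega)
    have hkall : ∀ k : ℕ, (ReF * ImF ^ k) *ᵥ X = 0 := aux_CH ReF ImF X hk0
    have hAall : ∀ k : ℕ, (ReA * ImF ^ k) *ᵥ X = 0 := by
      intro k
      rw [hReA_eq, Matrix.mul_assoc, ← Matrix.mulVec_mulVec, hkall k, Matrix.mulVec_zero]
    have hNall : ∀ k : ℕ, (ReA * N ^ k) *ᵥ X = 0 := by
      intro k; rw [hscale, hAall k, smul_zero]
    have hexp : ∀ t : ℝ, (ReA * NormedSpace.exp (t • N)) *ᵥ X = 0 :=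
      aux_exp_vanish ReA N X hNall
    have hf0 : ∀ t : ℝ, (Qc A (NormedSpace.exp ((2 * t) • ImF) *ᵥ X)).re = 0 := by
      intro t
      rw [hsm t, hreQ, Matrix.mulVec_mulVec, hexp t, dotProduct_zero]
    have hcontr := hint 1 one_pos X hX0
    rw [show (∫ t in (0:ℝ)..1,
        (Qc A (NormedSpace.exp ((2 * t) • ImF) *ᵥ X)).re) = ∫ t in (0:ℝ)..1, (0:ℝ) from
      intervalIntegral.integral_congr fun t _ => hf0 t,
      intervalIntegral.integral_zero, mul_zero] at hcontr
    exact lt_irrefl 0 hcontr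
  · -- (ii) → (i)
    intro hS T hT X hX
    set f : ℝ → ℝ := fun t => (Qc A (NormedSpace.exp ((2 * t) • ImF) *ᵥ X)).re with hfdef
    have hY : Continuous fun t : ℝ => NormedSpace.exp ((2 * t) • ImF) *ᵥ X := by
      letI : SeminormedRing (Matrix (Fin d ⊕ Fin d) (Fin d ⊕ Fin d) ℝ) :=
        Matrix.linftyOpSemiNormedRing
      letI : NormedRing (Matrix (Fin d ⊕ Fin d) (Fin d ⊕ Fin d) ℝ) := Matrix.linftyOpNormedRing
      letI : NormedAlgebra ℝ (Matrix (Fin d ⊕ Fin d) (Fin d ⊕ Fin d) ℝ) :=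
        Matrix.linftyOpNormedAlgebra
      exact ((continuous_iff_continuousAt.2 fun x => (NormedSpace.exp_analytic (𝕂 := ℝ) x).continuousAt).comp
        (((continuous_const.mul continuous_id).smul continuous_const))).matrix_mulVec
        continuous_const
    have hfc : Continuous f := by
      have : f = fun t => (NormedSpace.exp ((2 * t) • ImF) *ᵥ X) ⬝ᵥ
          ReA *ᵥ (NormedSpace.exp ((2 * t) • ImF) *ᵥ X) := funext fun t => hreQ _
      rw [this]
      exact hY.dotProduct (continuous_const.matrix_mulVec hY)
    have hfnn : ∀ t, 0 ≤ f t := fun t => hpos _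
    have hintg : IntervalIntegrable f MeasureTheory.volume 0 T := hfc.intervalIntegrable 0 T
    -- find a point where f is positive
    have hex : ∃ t₀ ∈ Set.Ioo (0:ℝ) T, 0 < f t₀ := by
      by_contra hno
      push_neg at hno
      have hzero : ∀ t ∈ Set.Ioo (0:ℝ) T, (ReA * NormedSpace.exp (t • N)) *ᵥ X = 0 := by
        intro t ht
        have hft : f t = 0 := le_antisymm (hno t ht) (hfnn t)
        rw [hfdef] at hft
        simp only [hsm t] at hft
        rw [hreQ] at hft
        set Y := NormedSpace.exp (t • N) *ᵥ X with hYdef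
        have hstar : star Y = Y := by funext i; exact star_trivial _
        have := (hpsd.dotProduct_mulVec_zero_iff Y).1 (by rw [hstar]; exact hft)
        rw [← Matrix.mulVec_mulVec]
        exact this
      have hNall : ∀ k : ℕ, (ReA * N ^ k) *ᵥ X = 0 := aux_vanishIoo ReA N X hT hzero
      have hAall : ∀ k : ℕ, (ReA * ImF ^ k) *ᵥ X = 0 := by
        intro k
        have := hNall k
        rw [hscale] at this
        have h2 : ((2:ℝ) ^ k) ≠ 0 := by positivity
        exact (smul_eq_zero.1 this).resolve_left h2
      have hFall : ∀ k : ℕ, (ReF * ImF ^ k) *ᵥ X = 0 := by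
        intro k
        rw [hReF_eq, Matrix.neg_mul, Matrix.neg_mul, Matrix.neg_mulVec, Matrix.mul_assoc,
          ← Matrix.mulVec_mulVec, hAall k, Matrix.mulVec_zero, neg_zero]
      exact hX (hS X fun k _ => hFall k)
    obtain ⟨t₀, ht₀, hft₀⟩ := hex
    -- positivity of the integral
    have hsupp : 0 < MeasureTheory.volume (Function.support f ∩ Set.Ioc 0 T) := by
      have hU : IsOpen ({t : ℝ | 0 < f t} ∩ Set.Ioo 0 T) :=
        (isOpen_lt continuous_const hfc).inter isOpen_Ioo
      have ht₀U : t₀ ∈ {t : ℝ | 0 < f t} ∩ Set.Ioo 0 T := ⟨hft₀, ht₀⟩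
      obtain ⟨ε, hε, hball⟩ := Metric.isOpen_iff.1 hU t₀ ht₀U
      have hsub : Metric.ball t₀ ε ⊆ Function.support f ∩ Set.Ioc 0 T := by
        intro x hx
        obtain ⟨hfx, hxI⟩ := hball hx
        exact ⟨ne_of_gt hfx, Set.Ioo_subset_Ioc_self hxI⟩
      calc (0:ENNReal) < MeasureTheory.volume (Metric.ball t₀ ε) :=
            Metric.measure_ball_pos _ _ hε
      _ ≤ MeasureTheory.volume (Function.support f ∩ Set.Ioc 0 T) :=
            MeasureTheory.measure_mono hsub
    have hIpos : 0 < ∫ t in (0:ℝ)..T, f t := by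
      rw [intervalIntegral.integral_pos_iff_support_of_nonneg_ae
        (Filter.Eventually.of_forall hfnn) hintg]
      exact ⟨hT, hsupp⟩
    have h1T : 0 < 1 / T := by positivity
    exact mul_pos h1T hIpos
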